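/- Let σ : S → E be a strategy and x a configuration of S. For any configuration y of E with y ⊆ σx such that all events of σx \ y are positive, there is a unique configuration x' ⊆ x of S with σx' = y. -/

import Mathlib

/-- The order and consistency data of an event structure. -/
structure PreES (E : Type) where
  le : E → E → Prop
  con : Set E → Prop

namespace PreES

variable {E F : Type}

/-- A configuration: every finite subset is consistent, and it is down-closed. -/
def Config (P : PreES E) (x : Set E) : Prop :=
  (∀ X : Set E, X ⊆ x → X.Finite → P.con X) ∧
  (∀ e e' : E, P.le e' e → e ∈ x → e' ∈ x)

/-- `e` is enabled at the configuration `x`: `x ∪ {e}` is again a configuration. -/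
def Enabled (P : PreES E) (x : Set E) (e : E) : Prop :=
  e ∉ x ∧ P.Config (insert e x)

/-- Immediate causal dependency `e → e'` : `e ≠ e'`, `e ≤ e'` and nothing strictly between. -/
def Imm (P : PreES E) (e e' : E) : Prop :=
  e ≠ e' ∧ P.le e e' ∧ ∀ d, P.le e d → P.le d e' → d = e ∨ d = e'

/-- A total map of event structures: configurations map to configurations,
injectively on each configuration. -/
def IsMap (P : PreES E) (Q : PreES F) (f : E → F) : Prop :=
  (∀ x : Set E, P.Config x → Q.Config (f '' x)) ∧
  (∀ x : Set E, P.Config x → ∀ e₁ ∈ x, ∀ e₂ ∈ x, f e₁ = f e₂ → e₁ = e₂)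

end PreES

/-- An event structure. -/
structure ES (E : Type) extends PreES E where
  le_refl : ∀ e, le e e
  le_trans : ∀ a b c, le a b → le b c → le a c
  le_antisymm : ∀ a b, le a b → le b a → a = b
  causes_finite : ∀ e, {e' | le e' e}.Finite
  con_singleton : ∀ e, con {e}
  con_subset : ∀ X Y : Set E, Y ⊆ X → con X → con Y
  con_extend : ∀ (X : Set E) (e e' : E), con X → le e e' → e' ∈ X → con (insert e X)

/-- No-overlap: events carrying the same variable are never concurrent. -/
def NoOverlap {E V : Type} (P : PreES E) (var : E → V) : Prop :=
  ∀ e e', var e = var e' →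
    ¬(P.con {e, e'} ∧ ¬ P.le e e' ∧ ¬ P.le e' e)

/-- Race-freeness: enabled events of opposite polarities can occur jointly.
`true` is the polarity `+`, `false` is `−`. -/
def RaceFree {E : Type} (P : PreES E) (pol : E → Bool) : Prop :=
  ∀ x : Set E, P.Config x → ∀ e e', P.Enabled x e → P.Enabled x e' →
    pol e = true → pol e' = false → e ≠ e' → P.Config (insert e (insert e' x))

/-- An (ordinary) strategy: a total, polarity preserving map of event structures
which is receptive and innocent. -/
def IsStrategy {SE E : Type} (S : PreES SE) (G : PreES E)
    (polS : SE → Bool) (polG : E → Bool) (σ : SE → E) : Prop :=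
  PreES.IsMap S G σ ∧
  (∀ s, polG (σ s) = polS s) ∧
  (∀ x : Set SE, S.Config x → ∀ e, polG e = false → G.Enabled (σ '' x) e →
    ∃! s, S.Enabled x s ∧ σ s = e) ∧
  (∀ s s', S.Imm s s' → (polS s' = false ∨ polS s = true) → G.Imm (σ s) (σ s'))

/-- An `𝓐`-strategy on an `𝓐`-game: a total, polarity preserving map with an
instantiation function of matching sorts, receptive (for every element of
matching sort) and innocent. -/
def IsAStrategy {SE E A V Srt : Type} (S : PreES SE) (G : PreES E)
    (polS : SE → Bool) (polG : E → Bool) (var : E → V)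
    (sortA : A → Srt) (sortV : V → Srt)
    (σ : SE → E) (inst : SE → A) : Prop :=
  PreES.IsMap S G σ ∧
  (∀ s, polG (σ s) = polS s) ∧
  (∀ s, sortA (inst s) = sortV (var (σ s))) ∧
  (∀ x : Set SE, S.Config x → ∀ e, polG e = false → G.Enabled (σ '' x) e →
    ∀ a, sortA a = sortV (var e) →
      ∃! s, S.Enabled x s ∧ σ s = e ∧ inst s = a) ∧
  (∀ s s', S.Imm s s' → (polS s' = false ∨ polS s = true) → G.Imm (σ s) (σ s'))

/-- An event of the `𝓐`-expansion: an event `e` together with a sort-respecting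
instantiation of its down-closure `[e]` (encoded as an `Option`-valued function
whose domain is exactly `[e]`). -/
structure ExEvent {E A V Srt : Type} (P : PreES E) (var : E → V)
    (sortA : A → Srt) (sortV : V → Srt) where
  ev : E
  inst : E → Option A
  dom : ∀ e', (inst e').isSome ↔ P.le e' ev
  srt : ∀ e' a, inst e' = some a → sortA a = sortV (var e')

/-- The `𝓐`-expansion of a game, as order and consistency data. -/
def expn {E A V Srt : Type} (P : PreES E) (var : E → V)
    (sortA : A → Srt) (sortV : V → Srt) : PreES (ExEvent P var sortA sortV) where
  le p q := P.le p.ev q.ev ∧ ∀ e', P.le e' p.ev → q.inst e' = p.inst e'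
  con X := P.con (ExEvent.ev '' X) ∧ ∀ p ∈ X, ∀ q ∈ X, p.ev = q.ev → p = q

/-- The projection `red : expn(E) → E`. -/
def red {E A V Srt : Type} {P : PreES E} {var : E → V}
    {sortA : A → Srt} {sortV : V → Srt} (p : ExEvent P var sortA sortV) : E := p.ev

/-- The instantiation `Inst(e,ε) = ε(e)` (needs reflexivity of the order). -/
def ExEvent.Inst {E A V Srt : Type} {P : PreES E} {var : E → V}
    {sortA : A → Srt} {sortV : V → Srt} (href : ∀ e, P.le e e)
    (p : ExEvent P var sortA sortV) : A :=
  (p.inst p.ev).get ((p.dom p.ev).mpr (href p.ev))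

/-- Parallel composition of the order/consistency data of two event structures. -/
def parPre {E F : Type} (P : PreES E) (Q : PreES F) : PreES (E ⊕ F) where
  le x y :=
    match x, y with
    | .inl a, .inl b => P.le a b
    | .inr a, .inr b => Q.le a b
    | _, _ => False
  con X := P.con {a | Sum.inl a ∈ X} ∧ Q.con {b | Sum.inr b ∈ X}

/-- Restriction of the data of an event structure to a subset of events. -/
def subPre {E : Type} (P : PreES E) (p : E → Prop) : PreES {e : E // p e} where
  le a b := P.le a.1 b.1
  con X := P.con (Subtype.val '' X)

/-- for a strategy `σ : S → E`, a configuration `x` of `S` and a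
configuration `y` of `E` with `y ⊆⁺ σ x` (only positive events removed), there
is a unique configuration `x' ⊆ x` with `σ x' = y`. -/
theorem strategy_pos_restriction {SEv E : Type}
    (SS : ES SEv) (G : ES E) (polS : SEv → Bool) (polG : E → Bool)
    (σ : SEv → E)
    (hstrat : IsStrategy SS.toPreES G.toPreES polS polG σ)
    (x : Set SEv) (hx : SS.toPreES.Config x)
    (y : Set E) (hy : G.toPreES.Config y)
    (hsub : y ⊆ σ '' x)
    (hpos : ∀ e ∈ (σ '' x) \ y, polG e = true) :
    ∃! x' : Set SEv, x' ⊆ x ∧ SS.toPreES.Config x' ∧ σ '' x' = y := by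
  obtain ⟨⟨hmap_cfg, hmap_inj⟩, hpol, hrecep, hinn⟩ := hstrat
  letI : PartialOrder SEv :=
    { le := SS.le
      le_refl := SS.le_refl
      le_trans := SS.le_trans
      le_antisymm := SS.le_antisymm }
  -- Key down-closure fact, using innocence.
  have key : ∀ s ∈ x, ∀ s', SS.le s' s → σ s ∈ y → σ s' ∈ y := by
    intro s hs s' hle hsy
    by_contra hnot
    set B : Set SEv := {d | SS.le s' d ∧ SS.le d s ∧ σ d ∉ y} with hBdef
    have hBfin : B.Finite := (SS.causes_finite s).subset fun d hd => hd.2.1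
    have hBne : B.Nonempty := ⟨s', ⟨SS.le_refl s', hle, hnot⟩⟩
    obtain ⟨s₁, hs₁B, hs₁max'⟩ := hBfin.exists_maximalFor id B hBne
    have hs₁max : ∀ a' ∈ B, s₁ ≤ a' → s₁ = a' := fun a ha h => le_antisymm h (hs₁max' ha h)
    have hs₁ne : s₁ ≠ s := fun h => hs₁B.2.2 (h ▸ hsy)
    set C : Set SEv := {d | SS.le s₁ d ∧ SS.le d s ∧ d ≠ s₁} with hCdef
    have hCfin : C.Finite := (SS.causes_finite s).subset fun d hd => hd.2.1
    have hCne : C.Nonempty := ⟨s, ⟨hs₁B.2.1, SS.le_refl s, hs₁ne.symm⟩⟩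
    obtain ⟨s₂, hs₂C, hs₂min'⟩ := hCfin.exists_minimalFor id C hCne
    have hs₂min : ∀ a' ∈ C, a' ≤ s₂ → s₂ = a' := fun a ha h => le_antisymm (hs₂min' ha h) h
    have himm : SS.toPreES.Imm s₁ s₂ := by
      refine ⟨fun h => hs₂C.2.2 h.symm, hs₂C.1, ?_⟩
      intro d hd1 hd2
      by_cases hds₁ : d = s₁
      · exact Or.inl hds₁
      · have hdC : d ∈ C := ⟨hd1, SS.le_trans _ _ _ hd2 hs₂C.2.1, hds₁⟩
        exact Or.inr ((hs₂min d hdC hd2).symm)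
    have hs₂y : σ s₂ ∈ y := by
      by_contra hs₂ny
      have hs₂B : s₂ ∈ B :=
        ⟨SS.le_trans _ _ _ hs₁B.1 hs₂C.1, hs₂C.2.1, hs₂ny⟩
      exact hs₂C.2.2 (hs₁max s₂ hs₂B hs₂C.1).symm
    have hs₁x : s₁ ∈ x := hx.2 s s₁ hs₁B.2.1 hs
    have hps₁ : polS s₁ = true := by
      have := hpos (σ s₁) ⟨⟨s₁, hs₁x, rfl⟩, hs₁B.2.2⟩
      rwa [hpol s₁] at this
    have hG := hinn s₁ s₂ himm (Or.inr hps₁)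
    exact hs₁B.2.2 (hy.2 (σ s₂) (σ s₁) hG.2.1 hs₂y)
  refine ⟨{s | s ∈ x ∧ σ s ∈ y}, ⟨fun s hs => hs.1, ⟨?_, ?_⟩, ?_⟩, ?_⟩
  · intro X hX hXfin
    exact hx.1 X (fun e he => (hX he).1) hXfin
  · intro e e' hle he
    exact ⟨hx.2 e e' hle he.1, key e he.1 e' hle he.2⟩
  · ext e
    constructor
    · rintro ⟨s, hs, rfl⟩
      exact hs.2
    · intro he
      obtain ⟨s, hsx, rfl⟩ := hsub he
      exact ⟨s, ⟨hsx, he⟩, rfl⟩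
  · rintro x'' ⟨hsubx, hcfg, himg⟩
    ext s
    constructor
    · intro hs
      exact ⟨hsubx hs, himg ▸ ⟨s, hs, rfl⟩⟩
    · rintro ⟨hsx, hsy⟩
      rw [← himg] at hsy
      obtain ⟨t, ht, hts⟩ := hsy
      have := hmap_inj x hx t (hsubx ht) s hsx hts
      exact this ▸ ht
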